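/- Wirtinger's inequality: let n, k ≥ 1 and let e₁, …, e_{2k} be vectors in ℂⁿ that are orthonormal for the real inner product. Then the 2k × 2k real matrix A with entries A_{jl} = ω(e_j, e_l) satisfies det A ≤ 1, and det A = 1 if and only if the real span of e₁, …, e_{2k} is closed under multiplication by i (i.e. it is a complex k-dimensional subspace of ℂⁿ). (The quantity det A is the square of the value of the calibration ω^k/k! on the 2k-tuple.) -/

import Mathlib

open Complex Finset

/-- The real inner product on `ℂⁿ`: `⟪u,v⟫ = Re Σⱼ uⱼ · conj(vⱼ)`. -/
noncomputable def rinner {n : ℕ} (u v : EuclideanSpace ℂ (Fin n)) : ℝ :=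
  (∑ j, u j * starRingEnd ℂ (v j)).re

/-- The standard Kähler 2-form on `ℂⁿ`: `ω(u,v) = ⟪i•u, v⟫`. -/
noncomputable def kahlerForm {n : ℕ} (u v : EuclideanSpace ℂ (Fin n)) : ℝ :=
  rinner (Complex.I • u) v

namespace WirAux

variable {n : ℕ}

lemma rinner_eq (u v : EuclideanSpace ℂ (Fin n)) :
    rinner u v = (inner (𝕜 := ℂ) v u).re := by
  simp [rinner, PiLp.inner_apply, RCLike.inner_apply, mul_comm]

lemma rinner_comm (u v : EuclideanSpace ℂ (Fin n)) : rinner u v = rinner v u := by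
  rw [rinner_eq, rinner_eq, ← inner_conj_symm (𝕜 := ℂ) u v, Complex.conj_re]

lemma rinner_add_right (u v w : EuclideanSpace ℂ (Fin n)) :
    rinner u (v + w) = rinner u v + rinner u w := by
  simp [rinner_eq, inner_add_left]

lemma rinner_sub_left (u v w : EuclideanSpace ℂ (Fin n)) :
    rinner (u - v) w = rinner u w - rinner v w := by
  simp [rinner_eq, inner_sub_right]

lemma rinner_sub_right (u v w : EuclideanSpace ℂ (Fin n)) :
    rinner u (v - w) = rinner u v - rinner u w := by
  simp [rinner_eq, inner_sub_left]

lemma rinner_neg_left (u v : EuclideanSpace ℂ (Fin n)) :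
    rinner (-u) v = -rinner u v := by
  simp [rinner_eq, inner_neg_right]

lemma rinner_zero_right (u : EuclideanSpace ℂ (Fin n)) : rinner u 0 = 0 := by
  simp [rinner_eq]

lemma rinner_smul_left (r : ℝ) (u v : EuclideanSpace ℂ (Fin n)) :
    rinner (r • u) v = r * rinner u v := by
  rw [rinner_eq, rinner_eq, RCLike.real_smul_eq_coe_smul (K := ℂ), inner_smul_right]
  simp

lemma rinner_smul_right (r : ℝ) (u v : EuclideanSpace ℂ (Fin n)) :
    rinner u (r • v) = r * rinner u v := by
  rw [rinner_comm, rinner_smul_left, rinner_comm]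

lemma rinner_sum_left {ι : Type*} (s : Finset ι) (f : ι → EuclideanSpace ℂ (Fin n))
    (v : EuclideanSpace ℂ (Fin n)) :
    rinner (∑ i ∈ s, f i) v = ∑ i ∈ s, rinner (f i) v := by
  simp [rinner_eq, inner_sum]

lemma rinner_sum_right {ι : Type*} (s : Finset ι) (f : ι → EuclideanSpace ℂ (Fin n))
    (v : EuclideanSpace ℂ (Fin n)) :
    rinner v (∑ i ∈ s, f i) = ∑ i ∈ s, rinner v (f i) := by
  simp [rinner_eq, sum_inner]

lemma rinner_I_I (u v : EuclideanSpace ℂ (Fin n)) :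
    rinner (Complex.I • u) (Complex.I • v) = rinner u v := by
  rw [rinner_eq, rinner_eq, inner_smul_left, inner_smul_right, ← mul_assoc]
  simp [Complex.conj_I]

lemma rinner_self_eq_norm_sq (u : EuclideanSpace ℂ (Fin n)) : rinner u u = ‖u‖ ^ 2 := by
  rw [rinner_eq, ← inner_self_eq_norm_sq (𝕜 := ℂ)]
  simp [RCLike.re_to_complex]

lemma rinner_self_nonneg (u : EuclideanSpace ℂ (Fin n)) : 0 ≤ rinner u u := by
  rw [rinner_self_eq_norm_sq]; positivity

lemma eq_zero_of_rinner_self (u : EuclideanSpace ℂ (Fin n)) (h : rinner u u = 0) : u = 0 := by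
  rw [rinner_self_eq_norm_sq] at h
  simpa using pow_eq_zero_iff (n := 2) (by norm_num) |>.mp h

/-- The Gram matrix of any family of vectors is positive semidefinite. -/
lemma gram_posSemidef {N : ℕ} (v : Fin N → EuclideanSpace ℂ (Fin n)) :
    (Matrix.of fun j l => rinner (v j) (v l)).PosSemidef := by
  apply Matrix.PosSemidef.of_dotProduct_mulVec_nonneg
  · show _ = _
    ext j l
    simp only [Matrix.conjTranspose_apply, Matrix.of_apply, star_trivial]
    exact rinner_comm (v l) (v j)
  · intro x
    have key : dotProduct (star x) ((Matrix.of fun j l => rinner (v j) (v l)).mulVec x)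
        = rinner (∑ j, x j • v j) (∑ l, x l • v l) := by
      rw [rinner_sum_left]
      simp only [dotProduct, Matrix.mulVec, star_trivial, Matrix.of_apply,
        rinner_smul_left, rinner_sum_right, rinner_smul_right]
      refine Finset.sum_congr rfl fun j _ => ?_
      rw [Finset.mul_sum]
      exact Finset.sum_congr rfl fun l _ => by ring
    rw [key]
    exact rinner_self_nonneg _

/-- A vector in the span of an orthonormal family equals its expansion in that family. -/
lemma repr_of_mem_span {N : ℕ} (e : Fin N → EuclideanSpace ℂ (Fin n))
    (horth : ∀ j l, rinner (e j) (e l) = if j = l then 1 else 0)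
    {u : EuclideanSpace ℂ (Fin n)} (hu : u ∈ Submodule.span ℝ (Set.range e)) :
    u = ∑ m, rinner u (e m) • e m := by
  set d := u - ∑ m, rinner u (e m) • e m with hd
  have hde : ∀ p, rinner d (e p) = 0 := by
    intro p
    rw [hd, rinner_sub_left, rinner_sum_left]
    simp only [rinner_smul_left, horth, mul_ite, mul_one, mul_zero]
    rw [Finset.sum_ite_eq' Finset.univ p (fun m => rinner u (e m))]
    simp
  have hdS : d ∈ Submodule.span ℝ (Set.range e) := by
    refine Submodule.sub_mem _ hu ?_
    exact Submodule.sum_mem _ fun m _ =>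
      Submodule.smul_mem _ _ (Submodule.subset_span ⟨m, rfl⟩)
  have hzero : ∀ y ∈ Submodule.span ℝ (Set.range e), rinner d y = 0 := by
    intro y hy
    induction hy using Submodule.span_induction with
    | mem x hx => obtain ⟨p, rfl⟩ := hx; exact hde p
    | zero => exact rinner_zero_right d
    | add x y hx hy ihx ihy => rw [rinner_add_right, ihx, ihy, add_zero]
    | smul a x hx ih => rw [rinner_smul_right, ih, mul_zero]
  have hdz : d = 0 := eq_zero_of_rinner_self d (hzero d hdS)
  exact sub_eq_zero.mp hdz

open Polynomial Filter in
lemma eval_charpoly' {m : ℕ} (M : Matrix (Fin m) (Fin m) ℝ) (x : ℝ) :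
    M.charpoly.eval x = (Matrix.diagonal (fun _ : Fin m => x) - M).det := by
  rw [Matrix.charpoly, ← Polynomial.coe_evalRingHom, RingHom.map_det]
  congr 1
  ext i j
  by_cases h : i = j <;>
    simp [Matrix.charmatrix_apply, Matrix.diagonal, h]

open Polynomial Filter in
/-- A real matrix squaring to `-1` is a complex structure, hence has determinant `1`. -/
lemma det_eq_one_of_sq_eq_neg_one {m : ℕ} (hm : 0 < m) (M : Matrix (Fin m) (Fin m) ℝ)
    (hM : M * M = -1) : M.det = 1 := by
  have hdet2 : M.det ^ 2 = (-1 : ℝ) ^ m := by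
    rw [sq, ← Matrix.det_mul, hM]
    simp [Matrix.det_neg, Fintype.card_fin]
  have hparity : (-1 : ℝ) ^ m = 1 := by
    rcases Nat.even_or_odd m with h | h
    · exact h.neg_one_pow
    · exfalso
      have := sq_nonneg M.det
      rw [hdet2, h.neg_one_pow] at this
      linarith
  rw [hparity] at hdet2
  have hroot : ∀ x : ℝ, M.charpoly.eval x ≠ 0 := by
    intro x hx
    rw [eval_charpoly'] at hx
    obtain ⟨v, hv0, hv⟩ := (Matrix.exists_mulVec_eq_zero_iff).mpr hx
    have hdiag : (Matrix.diagonal (fun _ : Fin m => x)).mulVec v = x • v := by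
      ext i
      simp [Matrix.mulVec_diagonal]
    rw [Matrix.sub_mulVec, hdiag, sub_eq_zero] at hv
    have hMv : M.mulVec v = x • v := hv.symm
    have h2 : M.mulVec (M.mulVec v) = -v := by
      rw [Matrix.mulVec_mulVec, hM]
      simp [Matrix.neg_mulVec]
    rw [hMv, Matrix.mulVec_smul, hMv, smul_smul] at h2
    have h3 : (x * x + 1) • v = 0 := by
      rw [add_smul, one_smul, h2]
      simp
    rcases smul_eq_zero.mp h3 with h | h
    · nlinarith
    · exact hv0 h
  have hmono := M.charpoly_monic
  have hdeg : M.charpoly.natDegree = m := by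
    simpa using M.charpoly_natDegree_eq_dim
  have hp0 : M.charpoly.eval 0 = M.det := by
    rw [Matrix.det_eq_sign_charpoly_coeff, Polynomial.coeff_zero_eq_eval_zero]
    simp [Fintype.card_fin, hparity]
  have hpos : 0 < M.charpoly.eval 0 := by
    rcases lt_trichotomy (M.charpoly.eval 0) 0 with h | h | h
    · exfalso
      have htop : Tendsto (fun x => M.charpoly.eval x) atTop atTop := by
        apply Polynomial.tendsto_atTop_of_leadingCoeff_nonneg
        · rw [← Polynomial.natDegree_pos_iff_degree_pos, hdeg]; exact hm
        · rw [hmono.leadingCoeff]; norm_num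
      obtain ⟨a, ha⟩ := (htop.eventually_ge_atTop 1).exists_forall_of_atTop
      set x₀ : ℝ := max a 0 with hx₀
      have hx₀0 : (0:ℝ) ≤ x₀ := le_max_right a 0
      have hpx₀ : (1:ℝ) ≤ M.charpoly.eval x₀ := ha x₀ (le_max_left a 0)
      have hcont : ContinuousOn (fun x => M.charpoly.eval x) (Set.Icc 0 x₀) :=
        (M.charpoly.continuous).continuousOn
      have h0mem : (0:ℝ) ∈ Set.Icc (M.charpoly.eval 0) (M.charpoly.eval x₀) :=
        ⟨le_of_lt h, by linarith⟩
      obtain ⟨c, _, hc⟩ := intermediate_value_Icc hx₀0 hcont h0mem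
      exact hroot c hc
    · exact absurd h (hroot 0)
    · exact h
  rw [hp0] at hpos
  nlinarith

end WirAux

open WirAux in
/-- **Wirtinger's inequality.** If `e₁, …, e_{2k}` are vectors in `ℂⁿ` that are
orthonormal for the real inner product, then the real `2k × 2k` matrix
`A_{jl} = ω(e_j, e_l)` satisfies `det A ≤ 1`, with equality iff the real span of
the `e_j` is closed under multiplication by `i`. -/
theorem wirtinger_inequality {n k : ℕ} (hn : 1 ≤ n) (hk : 1 ≤ k)
    (e : Fin (2 * k) → EuclideanSpace ℂ (Fin n))
    (horth : ∀ j l, rinner (e j) (e l) = if j = l then 1 else 0)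
    (A : Matrix (Fin (2 * k)) (Fin (2 * k)) ℝ)
    (hA : ∀ j l, A j l = kahlerForm (e j) (e l)) :
    A.det ≤ 1 ∧
      (A.det = 1 ↔
        ∀ v ∈ Submodule.span ℝ (Set.range e),
          Complex.I • v ∈ Submodule.span ℝ (Set.range e)) := by
  classical
  set w : Fin (2 * k) → EuclideanSpace ℂ (Fin n) := fun j => Complex.I • e j with hw
  have hAe : ∀ j l, A j l = rinner (w j) (e l) := fun j l => hA j l
  have hww : ∀ j l, rinner (w j) (w l) = if j = l then 1 else 0 := by
    intro j l
    rw [show w j = Complex.I • e j from rfl, show w l = Complex.I • e l from rfl, rinner_I_I]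
    exact horth j l
  set q : Fin (2 * k) → EuclideanSpace ℂ (Fin n) := fun j => ∑ m, A j m • e m with hq
  set G : Matrix (Fin (2 * k)) (Fin (2 * k)) ℝ := A * A.transpose with hG
  have hGentry : ∀ j l, G j l = ∑ m, A j m * A l m := by
    intro j l
    simp [hG, Matrix.mul_apply, Matrix.transpose_apply]
  have hqe : ∀ j p, rinner (q j) (e p) = A j p := by
    intro j p
    rw [show q j = ∑ m, A j m • e m from rfl, rinner_sum_left]
    simp only [rinner_smul_left, horth, mul_ite, mul_one, mul_zero]
    rw [Finset.sum_ite_eq' Finset.univ p (fun m => A j m)]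
    simp
  have hwq : ∀ j l, rinner (w j) (q l) = G j l := by
    intro j l
    rw [show q l = ∑ m, A l m • e m from rfl, rinner_sum_right]
    simp only [rinner_smul_right]
    rw [hGentry]
    refine Finset.sum_congr rfl fun m _ => ?_
    rw [← hAe j m]; ring
  have hqq : ∀ j l, rinner (q j) (q l) = G j l := by
    intro j l
    rw [show q l = ∑ m, A l m • e m from rfl, rinner_sum_right]
    simp only [rinner_smul_right, hqe]
    rw [hGentry]
    exact Finset.sum_congr rfl fun m _ => mul_comm _ _
  have hGsymm : ∀ j l, G j l = G l j := by
    intro j l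
    rw [hGentry, hGentry]
    exact Finset.sum_congr rfl fun m _ => mul_comm _ _
  have hqw : ∀ j l, rinner (q j) (w l) = G j l := by
    intro j l
    rw [rinner_comm, hwq, hGsymm]
  have hEntry : ∀ j l, (1 - G) j l = rinner (w j - q j) (w l - q l) := by
    intro j l
    rw [rinner_sub_left, rinner_sub_right, rinner_sub_right, hww, hwq, hqw, hqq]
    by_cases hjl : j = l <;>
      simp [Matrix.sub_apply, Matrix.one_apply, hjl] <;> ring
  have hGpsd : G.PosSemidef := by
    have h := gram_posSemidef q
    have heq : (Matrix.of fun j l => rinner (q j) (q l)) = G := by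
      ext j l
      rw [Matrix.of_apply, hqq]
    rwa [heq] at h
  have hGle : (1 - G).PosSemidef := by
    have h := gram_posSemidef (fun j => w j - q j)
    have heq : (Matrix.of fun j l => rinner (w j - q j) (w l - q l)) = 1 - G := by
      ext j l
      rw [Matrix.of_apply, ← hEntry]
    rwa [heq] at h
  have hH : G.IsHermitian := hGpsd.1
  have hμ0 : ∀ i, 0 ≤ hH.eigenvalues i := fun i => hGpsd.eigenvalues_nonneg i
  have hμ1 : ∀ i, hH.eigenvalues i ≤ 1 := by
    intro i
    have hvec := hH.mulVec_eigenvectorBasis i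
    set v : Fin (2 * k) → ℝ := ⇑(hH.eigenvectorBasis i) with hv
    have hv1 : dotProduct v v = 1 := by
      have h1 := hH.eigenvectorBasis.orthonormal.1 i
      have h2 : (inner ℝ (hH.eigenvectorBasis i) (hH.eigenvectorBasis i) : ℝ) = 1 := by
        rw [real_inner_self_eq_norm_sq, h1]; norm_num
      rw [← h2, PiLp.inner_apply]
      simp [v, dotProduct, sq]
    have hGv : dotProduct v (G.mulVec v) = hH.eigenvalues i := by
      rw [hvec]
      rw [dotProduct_smul, smul_eq_mul, hv1, mul_one]
    have h0 := hGle.dotProduct_mulVec_nonneg v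
    rw [Matrix.sub_mulVec, Matrix.one_mulVec, star_trivial, dotProduct_sub,
      hGv, hv1] at h0
    linarith
  have hdetG : G.det = ∏ i, hH.eigenvalues i := by
    simpa using hH.det_eq_prod_eigenvalues
  have hdetAG : G.det = A.det ^ 2 := by
    rw [hG, Matrix.det_mul, Matrix.det_transpose, sq]
  have hsq_le : A.det ^ 2 ≤ 1 := by
    rw [← hdetAG, hdetG]
    exact Finset.prod_le_one (fun i _ => hμ0 i) (fun i _ => hμ1 i)
  have hle : A.det ≤ 1 := by nlinarith
  refine ⟨hle, ?_, ?_⟩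
  · -- det A = 1 → span is closed under multiplication by I
    intro h1
    have hprod : ∏ i, hH.eigenvalues i = 1 := by
      rw [← hdetG, hdetAG, h1]; norm_num
    have hall : ∀ i, hH.eigenvalues i = 1 := by
      intro i
      by_contra hne
      have hlt : hH.eigenvalues i < 1 := lt_of_le_of_ne (hμ1 i) hne
      have h2 : ∏ j, hH.eigenvalues j ≤ hH.eigenvalues i := by
        rw [← Finset.mul_prod_erase Finset.univ _ (Finset.mem_univ i)]
        have hrest : ∏ j ∈ Finset.univ.erase i, hH.eigenvalues j ≤ 1 :=
          Finset.prod_le_one (fun j _ => hμ0 j) (fun j _ => hμ1 j)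
        simpa using mul_le_of_le_one_right (hμ0 i) hrest
      rw [hprod] at h2
      linarith
    have hG1 : G = 1 := by
      have hst := hH.spectral_theorem
      have hdiag : Matrix.diagonal (RCLike.ofReal ∘ hH.eigenvalues)
          = (1 : Matrix (Fin (2 * k)) (Fin (2 * k)) ℝ) := by
        have hfun : (RCLike.ofReal ∘ hH.eigenvalues : Fin (2 * k) → ℝ) = fun _ => 1 := by
          funext i
          simp [hall i]
        rw [hfun, Matrix.diagonal_one]
      rw [hdiag, map_one] at hst
      exact hst
    have hwmem : ∀ j, w j ∈ Submodule.span ℝ (Set.range e) := by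
      intro j
      have hz : rinner (w j - q j) (w j - q j) = 0 := by
        rw [← hEntry, hG1]
        simp
      have hwq' : w j = q j := sub_eq_zero.mp (eq_zero_of_rinner_self _ hz)
      rw [hwq', show q j = ∑ m, A j m • e m from rfl]
      exact Submodule.sum_mem _ fun m _ =>
        Submodule.smul_mem _ _ (Submodule.subset_span ⟨m, rfl⟩)
    intro v hv
    induction hv using Submodule.span_induction with
    | mem x hx => obtain ⟨j, rfl⟩ := hx; exact hwmem j
    | zero => rw [smul_zero]; exact Submodule.zero_mem _
    | add x y hx hy ihx ihy => rw [smul_add]; exact Submodule.add_mem _ ihx ihy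
    | smul a x hx ih => rw [smul_comm]; exact Submodule.smul_mem _ _ ih
  · -- span closed under multiplication by I → det A = 1
    intro hcl
    have hwS : ∀ j, w j ∈ Submodule.span ℝ (Set.range e) := fun j =>
      hcl (e j) (Submodule.subset_span ⟨j, rfl⟩)
    have hwrep : ∀ j, w j = ∑ m, A j m • e m := by
      intro j
      rw [repr_of_mem_span e horth (hwS j)]
      exact Finset.sum_congr rfl fun m _ => by rw [← hAe]
    have hAA : A * A = -1 := by
      ext j p
      have hIw : Complex.I • w j = -(e j) := by
        rw [show w j = Complex.I • e j from rfl, smul_smul, Complex.I_mul_I, neg_one_smul]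
      have hstep : Complex.I • w j = ∑ l, A j l • w l := by
        conv_lhs => rw [hwrep j]
        rw [Finset.smul_sum]
        exact Finset.sum_congr rfl fun l _ => smul_comm _ _ _
      have hmain : rinner (Complex.I • w j) (e p) = ∑ l, A j l * A l p := by
        rw [hstep, rinner_sum_left]
        simp only [rinner_smul_left]
        exact Finset.sum_congr rfl fun l _ => by rw [← hAe]
      rw [hIw, rinner_neg_left, horth] at hmain
      rw [Matrix.mul_apply, ← hmain]
      by_cases hjp : j = p <;> simp [Matrix.neg_apply, Matrix.one_apply, hjp]
    exact det_eq_one_of_sq_eq_neg_one (by omega) A hAA
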